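/- Main inequality for the Bellman function: Let 1 < p < ∞, p' = p/(p-1), and let (F₋,f₋,A₋,v₋), (F₊,f₊,A₊,v₊) ∈ D. Set F̃ = (F₋+F₊)/2, f̃ = (f₋+f₊)/2, Ã = (A₋+A₊)/2, ṽ = (v₋+v₊)/2. For any a, b, c ≥ 0, if (F, f, A, v) = (F̃ + b^p, f̃ + ab, Ã + c, ṽ + a^(p')) lies in D, then B(F,f,A,v) − ½[B(F₋,f₋,A₋,v₋) + B(F₊,f₊,A₊,v₊)] ≥ p^p · f^p/(A+(p-1)v)^p · c. -/

import Mathlib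

lemma rpow_sub_one_mul {x p : ℝ} (hx : 0 ≤ x) (hp : 1 < p) : x^(p-1) * x = x^p := by
  rcases hx.eq_or_lt with h|h
  · rw [← h, Real.zero_rpow (by linarith), Real.zero_rpow (by positivity : p ≠ 0)]; ring
  · calc x^(p-1)*x = x^(p-1)*x^(1:ℝ) := by rw [Real.rpow_one]
      _ = x^(p-1+1) := (Real.rpow_add h _ _).symm
      _ = x^p := by norm_num

lemma young_tangent {p : ℝ} (hp : 1 < p) {t f1 r1 : ℝ} (ht : 0 ≤ t) (hf : 0 ≤ f1) (hr : 0 < r1) :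
    p * (t ^ (p-1) * f1) ≤ f1 ^ p / r1 ^ (p-1) + (p-1) * (t ^ p * r1) := by
  have hp0 : (0:ℝ) < p := by linarith
  have hp1 : (0:ℝ) < p - 1 := by linarith
  have hpq : p.HolderConjugate (p/(p-1)) := Real.HolderConjugate.conjExponent hp
  set s := r1 ^ ((p-1)/p) with hs
  have hs0 : 0 < s := Real.rpow_pos_of_pos hr _
  have hy := Real.young_inequality_of_nonneg (a := f1/s) (b := t^(p-1)*s)
    (div_nonneg hf hs0.le) (mul_nonneg (Real.rpow_nonneg ht _) hs0.le) hpq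
  have eA : (f1/s)*(t^(p-1)*s) = t^(p-1)*f1 := by field_simp
  have eB : (f1/s)^p = f1^p / r1^(p-1) := by
    rw [Real.div_rpow hf hs0.le, hs, ← Real.rpow_mul hr.le, div_mul_cancel₀ _ hp0.ne']
  have eC : (t^(p-1)*s)^(p/(p-1)) = t^p * r1 := by
    rw [Real.mul_rpow (Real.rpow_nonneg ht _) hs0.le, hs,
      ← Real.rpow_mul ht, ← Real.rpow_mul hr.le]
    congr 1
    · congr 1; field_simp
    · rw [show (p-1)/p * (p/(p-1)) = 1 by field_simp, Real.rpow_one]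
  rw [eA, eB, eC] at hy
  have h2 := mul_le_mul_of_nonneg_left hy hp0.le
  have e3 : p * (f1^p/r1^(p-1)/p + t^p*r1/(p/(p-1))) = f1^p/r1^(p-1) + (p-1)*(t^p*r1) := by
    field_simp
  linarith [e3 ▸ h2]

/-- The domain `D` of the Bellman function. -/
def bellmanDomain (p : ℝ) : Set (ℝ × ℝ × ℝ × ℝ) :=
  {x | 0 ≤ x.1 ∧ 0 ≤ x.2.1 ∧ 0 < x.2.2.1 ∧ 0 < x.2.2.2 ∧ x.2.2.1 ≤ x.2.2.2 ∧
    x.2.1 ^ p ≤ x.1 * x.2.2.2 ^ (p - 1)}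

/-- The Bellman function `B`. -/
noncomputable def bellmanB (p : ℝ) (x : ℝ × ℝ × ℝ × ℝ) : ℝ :=
  (p / (p - 1)) ^ p * x.1 - (p ^ p / (p - 1)) * x.2.1 ^ p / (x.2.2.1 + (p - 1) * x.2.2.2) ^ (p - 1)

theorem bellman_main_inequality (p p' : ℝ) (hp : 1 < p) (hp' : p' = p / (p - 1))
    (Fm fm Am vm Fp fp Ap vp : ℝ)
    (hm : (Fm, fm, Am, vm) ∈ bellmanDomain p)
    (hpl : (Fp, fp, Ap, vp) ∈ bellmanDomain p)
    (a b c : ℝ) (ha : 0 ≤ a) (hb : 0 ≤ b) (hc : 0 ≤ c)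
    (F f A v : ℝ)
    (hF : F = (Fm + Fp) / 2 + b ^ p)
    (hf : f = (fm + fp) / 2 + a * b)
    (hA : A = (Am + Ap) / 2 + c)
    (hv : v = (vm + vp) / 2 + a ^ p')
    (hx : (F, f, A, v) ∈ bellmanDomain p) :
    bellmanB p (F, f, A, v) -
      (1 / 2) * (bellmanB p (Fm, fm, Am, vm) + bellmanB p (Fp, fp, Ap, vp)) ≥
      p ^ p * f ^ p / (A + (p - 1) * v) ^ p * c := by
  have hp0 : (0:ℝ) < p := by linarith
  have hp1 : (0:ℝ) < p - 1 := by linarith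
  obtain ⟨hF0, hf0, hA0, hv0, -, -⟩ := hx
  obtain ⟨hFm0, hfm0, hAm0, hvm0, -, -⟩ := hm
  obtain ⟨hFp0, hfp0, hAp0, hvp0, -, -⟩ := hpl
  simp only [bellmanB]
  set R := A + (p-1)*v with hRdef
  set Rm := Am + (p-1)*vm with hRmdef
  set Rp := Ap + (p-1)*vp with hRpdef
  have hR : 0 < R := by have := mul_pos hp1 hv0; rw [hRdef]; linarith
  have hRm : 0 < Rm := by have := mul_pos hp1 hvm0; rw [hRmdef]; linarith
  have hRp : 0 < Rp := by have := mul_pos hp1 hvp0; rw [hRpdef]; linarith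
  have ht0 : 0 ≤ f / R := div_nonneg hf0 hR.le
  -- key algebraic identities
  have h1 : fm + fp = 2*f - 2*(a*b) := by rw [hf]; ring
  have h2 : Rm + Rp = 2*R - 2*c - 2*((p-1)*a^p') := by
    rw [hRmdef, hRpdef, hRdef, hA, hv]; ring
  have h3 : (f/R)^(p-1)*f = f^p/R^(p-1) := by
    rw [Real.div_rpow hf0 hR.le, div_mul_eq_mul_div, rpow_sub_one_mul hf0 hp]
  have h4 : (f/R)^p*R = f^p/R^(p-1) := by
    rw [Real.div_rpow hf0 hR.le, ← rpow_sub_one_mul hR.le hp]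
    field_simp
  have h5 : (p^p/(p-1))*(p-1) = p^p := by field_simp
  clear_value R Rm Rp
  -- Young tangent inequalities at the two endpoints
  have hYm := young_tangent hp ht0 hfm0 hRm
  have hYp := young_tangent hp ht0 hfp0 hRp
  have hKhalf : (0:ℝ) ≤ p^p/(p-1)/2 :=
    div_nonneg (div_nonneg (Real.rpow_nonneg hp0.le p) hp1.le) (by norm_num)
  have hN1 : 0 ≤ (p^p/(p-1)/2) *
      ((fm^p/Rm^(p-1) + (p-1)*((f/R)^p*Rm)) - p*((f/R)^(p-1)*fm)) :=
    mul_nonneg hKhalf (by linarith)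
  have hN2 : 0 ≤ (p^p/(p-1)/2) *
      ((fp^p/Rp^(p-1) + (p-1)*((f/R)^p*Rp)) - p*((f/R)^(p-1)*fp)) :=
    mul_nonneg hKhalf (by linarith)
  -- the cross-term Young inequality (hstar)
  have hQp : (0:ℝ) < (p/(p-1))^p := Real.rpow_pos_of_pos (div_pos hp0 hp1) p
  have hstar : (p^p/(p-1))*(p*((f/R)^(p-1)*(a*b))) ≤
      (p/(p-1))^p*b^p + p^p*(p-1)*(a^p'*(f/R)^p) := by
    set τ := (p-1)*(a^(1/(p-1))*(f/R)) with hτdef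
    have hτ0 : 0 ≤ τ := by
      apply mul_nonneg hp1.le (mul_nonneg (Real.rpow_nonneg ha _) ht0)
    have yt := young_tangent hp (t := τ) hτ0 hb one_pos
    rw [Real.one_rpow, div_one, mul_one] at yt
    have hτ1 : τ^(p-1) = (p-1)^(p-1)*(a*(f/R)^(p-1)) := by
      rw [hτdef, Real.mul_rpow hp1.le (mul_nonneg (Real.rpow_nonneg ha _) ht0),
        Real.mul_rpow (Real.rpow_nonneg ha _) ht0, ← Real.rpow_mul ha,
        one_div_mul_cancel hp1.ne', Real.rpow_one]
    have hτp : τ^p = (p-1)^p*(a^p'*(f/R)^p) := by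
      rw [hτdef, Real.mul_rpow hp1.le (mul_nonneg (Real.rpow_nonneg ha _) ht0),
        Real.mul_rpow (Real.rpow_nonneg ha _) ht0, ← Real.rpow_mul ha, hp']
      congr 2
      field_simp
    rw [hτ1, hτp] at yt
    have yt2 := mul_le_mul_of_nonneg_left yt hQp.le
    have c1 : (p/(p-1))^p*(p-1)^(p-1) = p^p/(p-1) := by
      rw [Real.div_rpow hp0.le hp1.le]
      rw [← rpow_sub_one_mul hp1.le hp]
      field_simp
    have e1 : (p^p/(p-1))*(p*((f/R)^(p-1)*(a*b))) =
        (p/(p-1))^p*(p*((p-1)^(p-1)*(a*(f/R)^(p-1))*b)) := by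
      linear_combination (p*(f/R)^(p-1)*a*b)*c1.symm
    have c2 : (p/(p-1))^p*((p-1)*((p-1)^p*(a^p'*(f/R)^p))) = p^p*(p-1)*(a^p'*(f/R)^p) := by
      rw [← rpow_sub_one_mul hp1.le hp]
      linear_combination ((p-1)^2*(a^p'*(f/R)^p))*c1 + ((p-1)*(a^p'*(f/R)^p))*h5
    have e2 : (p/(p-1))^p*(b^p + (p-1)*((p-1)^p*(a^p'*(f/R)^p))) =
        (p/(p-1))^p*b^p + p^p*(p-1)*(a^p'*(f/R)^p) := by
      linear_combination c2
    linarith [yt2, e1, e2]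
  -- the master algebraic identity
  have final : (p/(p-1))^p * b^p - (p^p/(p-1)) * (f^p/R^(p-1))
      + (p^p/(p-1)) * (fm^p/Rm^(p-1) + fp^p/Rp^(p-1))/2 - p^p * ((f/R)^p * c)
      = (p^p/(p-1)/2) * ((fm^p/Rm^(p-1) + (p-1)*((f/R)^p*Rm)) - p*((f/R)^(p-1)*fm))
      + (p^p/(p-1)/2) * ((fp^p/Rp^(p-1) + (p-1)*((f/R)^p*Rp)) - p*((f/R)^(p-1)*fp))
      + (((p/(p-1))^p*b^p + p^p*(p-1)*(a^p'*(f/R)^p))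
          - (p^p/(p-1))*(p*((f/R)^(p-1)*(a*b)))) := by
    linear_combination ((p^p/(p-1))*p/2*(f/R)^(p-1))*h1
      - ((p^p/(p-1))*(p-1)/2*(f/R)^p)*h2
      + ((p^p/(p-1))*p)*h3 - ((p^p/(p-1))*(p-1))*h4
      + ((f/R)^p*c + (p-1)*(a^p'*(f/R)^p))*h5
  have hFQ : (p/(p-1))^p*F = (p/(p-1))^p*((Fm+Fp)/2) + (p/(p-1))^p*b^p := by
    rw [hF]; ring
  have hRHS : p^p * f^p / R^p * c = p^p * ((f/R)^p * c) := by
    rw [Real.div_rpow hf0 hR.le]; ring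
  have big : 0 ≤ (p/(p-1))^p * b^p - (p^p/(p-1)) * (f^p/R^(p-1))
      + (p^p/(p-1)) * (fm^p/Rm^(p-1) + fp^p/Rp^(p-1))/2 - p^p * ((f/R)^p * c) := by
    rw [final]; linarith [hN1, hN2, hstar]
  have expand : ((p/(p-1))^p * F - p^p/(p-1) * f^p / R^(p-1)
      - 1/2 * (((p/(p-1))^p * Fm - p^p/(p-1) * fm^p / Rm^(p-1))
        + ((p/(p-1))^p * Fp - p^p/(p-1) * fp^p / Rp^(p-1))))
      - (p^p * f^p / R^p * c)
      = ((p/(p-1))^p * b^p - (p^p/(p-1)) * (f^p/R^(p-1))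
      + (p^p/(p-1)) * (fm^p/Rm^(p-1) + fp^p/Rp^(p-1))/2 - p^p * ((f/R)^p * c)) := by
    linear_combination hFQ - hRHS
  linarith [big, expand]
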